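/- Let k ≥ 2 be an integer and let x be a real number with 0 < x < 1. Then Σ_{l=1}^{k-1} [Γ(l - x)/(Γ(1-x)·Γ(l))] · [ 1/l - (l+1)/k + (l-1)/(k-1) ] = -(1/x)·[ 2·Γ(k+1-x)/(Γ(k+1)·Γ(3-x)) - 1 ], where Γ is the Gamma function. -/

import Mathlib

open Finset

private lemma gnat_pos (m : ℕ) (hm : 1 ≤ m) : 0 < Real.Gamma m :=
  Real.Gamma_pos_of_pos (by exact_mod_cast hm)

private lemma grec (y : ℝ) (hy : 0 < y) : Real.Gamma (y + 1) = y * Real.Gamma y :=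
  Real.Gamma_add_one hy.ne'

private lemma sumA (x : ℝ) (hx0 : 0 < x) (hx1 : x < 1) :
    ∀ m : ℕ, 1 ≤ m →
    ∑ l ∈ Finset.Icc 1 m, Real.Gamma ((l : ℝ) - x) / Real.Gamma l
      = Real.Gamma ((m : ℝ) + 1 - x) / ((1 - x) * Real.Gamma m) := by
  intro m hm
  induction m, hm using Nat.le_induction with
  | base =>
    rw [show Finset.Icc 1 1 = {1} from rfl, Finset.sum_singleton]
    push_cast
    rw [show (1:ℝ) + 1 - x = (1 - x) + 1 by ring, grec (1 - x) (by linarith),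
      Real.Gamma_one]
    have hG : 0 < Real.Gamma (1 - x) := Real.Gamma_pos_of_pos (by linarith)
    have h1x : (1:ℝ) - x ≠ 0 := by linarith
    field_simp
  | succ n hn ih =>
    rw [Finset.sum_Icc_succ_top (by omega : 1 ≤ n + 1), ih]
    have hn0 : (0:ℝ) < n := by exact_mod_cast hn
    have hG : 0 < Real.Gamma n := gnat_pos n hn
    have hGx : 0 < Real.Gamma ((n:ℝ) + 1 - x) := Real.Gamma_pos_of_pos (by linarith)
    have h1x : (1:ℝ) - x ≠ 0 := by linarith
    have h2x : (2:ℝ) - x ≠ 0 := by linarith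
    have hGne : Real.Gamma (n:ℝ) ≠ 0 := hG.ne'
    have hGxne : Real.Gamma ((n:ℝ) + 1 - x) ≠ 0 := hGx.ne'
    have hnne : (n:ℝ) ≠ 0 := hn0.ne'
    push_cast
    rw [show (n:ℝ) + 1 + 1 - x = ((n:ℝ) + 1 - x) + 1 by ring,
      grec ((n:ℝ) + 1 - x) (by linarith), grec (n:ℝ) hn0]
    field_simp
    ring

private lemma sumB (x : ℝ) (hx0 : 0 < x) (hx1 : x < 1) :
    ∀ m : ℕ, 1 ≤ m →
    ∑ l ∈ Finset.Icc 1 m, (l : ℝ) * (Real.Gamma ((l : ℝ) - x) / Real.Gamma l)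
      = Real.Gamma ((m : ℝ) + 2 - x) / ((2 - x) * Real.Gamma m)
        + x * Real.Gamma ((m : ℝ) + 1 - x) / ((1 - x) * Real.Gamma m) := by
  intro m hm
  induction m, hm using Nat.le_induction with
  | base =>
    rw [show Finset.Icc 1 1 = {1} from rfl, Finset.sum_singleton]
    push_cast
    rw [show (1:ℝ) + 2 - x = ((1 - x) + 1) + 1 by ring, grec ((1 - x) + 1) (by linarith),
      grec (1 - x) (by linarith),
      show (1:ℝ) + 1 - x = (1 - x) + 1 by ring, grec (1 - x) (by linarith),
      Real.Gamma_one]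
    have hG : 0 < Real.Gamma (1 - x) := Real.Gamma_pos_of_pos (by linarith)
    have h1x : (1:ℝ) - x ≠ 0 := by linarith
    have h2x : (2:ℝ) - x ≠ 0 := by linarith
    field_simp
    ring
  | succ n hn ih =>
    rw [Finset.sum_Icc_succ_top (by omega : 1 ≤ n + 1), ih]
    have hn0 : (0:ℝ) < n := by exact_mod_cast hn
    have hG : 0 < Real.Gamma n := gnat_pos n hn
    have hGx : 0 < Real.Gamma ((n:ℝ) + 1 - x) := Real.Gamma_pos_of_pos (by linarith)
    push_cast
    rw [show (n:ℝ) + 1 + 2 - x = (((n:ℝ) + 1 - x) + 1) + 1 by ring,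
      grec (((n:ℝ) + 1 - x) + 1) (by linarith), grec ((n:ℝ) + 1 - x) (by linarith),
      show (n:ℝ) + 2 - x = ((n:ℝ) + 1 - x) + 1 by ring, grec ((n:ℝ) + 1 - x) (by linarith),
      show (n:ℝ) + 1 + 1 - x = ((n:ℝ) + 1 - x) + 1 by ring, grec ((n:ℝ) + 1 - x) (by linarith),
      grec (n:ℝ) hn0]
    have hGne : Real.Gamma (n:ℝ) ≠ 0 := hG.ne'
    have hGxne : Real.Gamma ((n:ℝ) + 1 - x) ≠ 0 := hGx.ne'
    have hnne : (n:ℝ) ≠ 0 := hn0.ne'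
    have h1x : (1:ℝ) - x ≠ 0 := by linarith
    have h2x : (2:ℝ) - x ≠ 0 := by linarith
    field_simp
    ring

private lemma sumC (x : ℝ) (hx0 : 0 < x) (hx1 : x < 1) :
    ∀ m : ℕ, 1 ≤ m →
    ∑ l ∈ Finset.Icc 1 m, Real.Gamma ((l : ℝ) - x) / ((l : ℝ) * Real.Gamma l)
      = (1 / x) * (Real.Gamma (1 - x) - Real.Gamma ((m : ℝ) + 1 - x) / Real.Gamma ((m : ℝ) + 1)) := by
  intro m hm
  induction m, hm using Nat.le_induction with
  | base =>
    rw [show Finset.Icc 1 1 = {1} from rfl, Finset.sum_singleton]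
    push_cast
    rw [show (1:ℝ) + 1 - x = (1 - x) + 1 by ring, grec (1 - x) (by linarith),
      grec (1:ℝ) one_pos, Real.Gamma_one]
    field_simp
    ring
  | succ n hn ih =>
    rw [Finset.sum_Icc_succ_top (by omega : 1 ≤ n + 1), ih]
    have hn0 : (0:ℝ) < n := by exact_mod_cast hn
    have hG : 0 < Real.Gamma n := gnat_pos n hn
    have hGx : 0 < Real.Gamma ((n:ℝ) + 1 - x) := Real.Gamma_pos_of_pos (by linarith)
    push_cast
    rw [show (n:ℝ) + 1 + 1 - x = ((n:ℝ) + 1 - x) + 1 by ring,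
      grec ((n:ℝ) + 1 - x) (by linarith),
      grec ((n:ℝ) + 1) (by linarith), grec (n:ℝ) hn0]
    have hGne : Real.Gamma (n:ℝ) ≠ 0 := hG.ne'
    have hGxne : Real.Gamma ((n:ℝ) + 1 - x) ≠ 0 := hGx.ne'
    have hnne : (n:ℝ) ≠ 0 := hn0.ne'
    have h1x : (1:ℝ) - x ≠ 0 := by linarith
    have h2x : (2:ℝ) - x ≠ 0 := by linarith
    have hxne : x ≠ 0 := hx0.ne'
    field_simp
    ring

/-- For an integer `k ≥ 2` and `0 < x < 1`:
`Σ_{l=1}^{k-1} Γ(l-x)/(Γ(1-x)Γ(l)) · (1/l - (l+1)/k + (l-1)/(k-1))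
  = -(1/x)(2Γ(k+1-x)/(Γ(k+1)Γ(3-x)) - 1)`. -/
theorem gamma_sum_identity (k : ℕ) (hk : 2 ≤ k) (x : ℝ) (hx0 : 0 < x) (hx1 : x < 1) :
    ∑ l ∈ Finset.Icc 1 (k - 1),
      Real.Gamma ((l : ℝ) - x) / (Real.Gamma (1 - x) * Real.Gamma l) *
        (1 / (l : ℝ) - ((l : ℝ) + 1) / k + ((l : ℝ) - 1) / ((k : ℝ) - 1)) =
      -(1 / x) * (2 * Real.Gamma ((k : ℝ) + 1 - x) /
        (Real.Gamma ((k : ℝ) + 1) * Real.Gamma (3 - x)) - 1) := by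
  obtain ⟨m, rfl⟩ : ∃ m, k = m + 1 := ⟨k - 1, by omega⟩
  have hm : 1 ≤ m := by omega
  have hm0 : (0:ℝ) < m := by exact_mod_cast hm
  have hG1 : 0 < Real.Gamma (1 - x) := Real.Gamma_pos_of_pos (by linarith)
  have hGm : 0 < Real.Gamma (m : ℝ) := gnat_pos m hm
  have hGmx : 0 < Real.Gamma ((m:ℝ) + 1 - x) := Real.Gamma_pos_of_pos (by linarith)
  have h1x : (1:ℝ) - x ≠ 0 := by linarith
  have h2x : (2:ℝ) - x ≠ 0 := by linarith
  have hxne : x ≠ 0 := hx0.ne'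
  have hG1ne : Real.Gamma (1 - x) ≠ 0 := hG1.ne'
  have hGmne : Real.Gamma (m:ℝ) ≠ 0 := hGm.ne'
  have hGmxne : Real.Gamma ((m:ℝ) + 1 - x) ≠ 0 := hGmx.ne'
  have hmne : (m:ℝ) ≠ 0 := hm0.ne'
  have hm1ne : (m:ℝ) + 1 ≠ 0 := by linarith
  have hk1 : (m + 1 : ℕ) - 1 = m := by omega
  rw [hk1]
  have hsplit : ∀ l ∈ Finset.Icc 1 m,
      Real.Gamma ((l : ℝ) - x) / (Real.Gamma (1 - x) * Real.Gamma l) *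
        (1 / (l : ℝ) - ((l : ℝ) + 1) / ((m + 1 : ℕ) : ℝ) + ((l : ℝ) - 1) / (((m + 1 : ℕ) : ℝ) - 1)) =
      (1 / Real.Gamma (1 - x)) * (Real.Gamma ((l:ℝ) - x) / ((l:ℝ) * Real.Gamma l))
      + (1 / (Real.Gamma (1 - x) * ((m:ℝ) + 1) * m)) * ((l:ℝ) * (Real.Gamma ((l:ℝ) - x) / Real.Gamma l))
      + (-(1 / ((m:ℝ) + 1) + 1 / (m:ℝ)) / Real.Gamma (1 - x)) * (Real.Gamma ((l:ℝ) - x) / Real.Gamma l) := by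
    intro l hl
    simp only [Finset.mem_Icc] at hl
    have hl1 : (0:ℝ) < l := by exact_mod_cast hl.1
    have hGl : 0 < Real.Gamma (l : ℝ) := gnat_pos l hl.1
    push_cast
    field_simp
    have hmm : (m:ℝ) * (m:ℝ)⁻¹ = 1 := mul_inv_cancel₀ hmne
    linear_combination (-((l:ℝ) * Real.Gamma ((l:ℝ) - x)) - (l:ℝ) * Real.Gamma ((l:ℝ) - x) * m
      + (l:ℝ) ^ 2 * Real.Gamma ((l:ℝ) - x) + (l:ℝ) ^ 2 * Real.Gamma ((l:ℝ) - x) * m) * hmm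
  rw [Finset.sum_congr rfl hsplit]
  rw [Finset.sum_add_distrib, Finset.sum_add_distrib, ← Finset.mul_sum, ← Finset.mul_sum,
    ← Finset.mul_sum, sumA x hx0 hx1 m hm, sumB x hx0 hx1 m hm, sumC x hx0 hx1 m hm]
  push_cast
  rw [show (m:ℝ) + 1 + 1 - x = ((m:ℝ) + 1 - x) + 1 by ring,
    grec ((m:ℝ) + 1 - x) (by linarith),
    show (m:ℝ) + 2 - x = ((m:ℝ) + 1 - x) + 1 by ring,
    grec ((m:ℝ) + 1 - x) (by linarith),
    show (3:ℝ) - x = ((1 - x) + 1) + 1 by ring,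
    grec ((1 - x) + 1) (by linarith), grec (1 - x) (by linarith),
    grec ((m:ℝ) + 1) (by linarith), grec (m:ℝ) hm0,
    show (1:ℝ) - x + 1 = 2 - x by ring]
  field_simp
  ring
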